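/- arXiv:1610.07320 — 2 statements merged into one kernel-verified Lean document; each statement's English description precedes it below -/
import Mathlib

section
/- Let G=(V,E) be a connected simple graph, X_0 : V → ℤ/3ℤ an initial 3-coloring, and (X_t)_{t≥0} the 3-color CCA trajectory started from X_0. Then for every vertex x ∈ V and every t ≥ 1, the number of excitations ne_t(x) equals the maximum of the path integral ∫_W dX_0 over all walks W in G starting at x with at most t edges. -/
noncomputable section
attribute [local instance] Classical.propDecidable

open Filter

variable {V : Type*}

/-- Unique representative in `{-1,0,1}` of an element of `ℤ/3ℤ`. -/
def ZMod.repInt (a : ZMod 3) : ℤ := if a = 0 then 0 else if a = 1 then 1 else -1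

/-- One step of the 3-color cyclic cellular automaton: a vertex advances its color
by one (mod 3) iff some neighbor currently has the successor color. -/
def ccaStep (G : SimpleGraph V) (X : V → ZMod 3) : V → ZMod 3 :=
  fun v => if ∃ u, G.Adj v u ∧ X u = X v + 1 then X v + 1 else X v

/-- The CCA trajectory started from `X₀`. -/
def ccaTraj (G : SimpleGraph V) (X₀ : V → ZMod 3) : ℕ → V → ZMod 3 :=
  fun t => (ccaStep G)^[t] X₀

/-- A vertex is excited at time `t` for CCA iff its color advances. -/
def ccaExcited (G : SimpleGraph V) (X₀ : V → ZMod 3) (t : ℕ) (v : V) : Prop :=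
  ccaTraj G X₀ (t + 1) v = ccaTraj G X₀ t v + 1

/-- Number of excitations of `x` at times `0, …, t-1` (CCA). -/
def ccaNe (G : SimpleGraph V) (X₀ : V → ZMod 3) (t : ℕ) (x : V) : ℕ :=
  ((Finset.range t).filter fun s => ccaExcited G X₀ s x).card

/-- The CCA 1-form `dX` on ordered pairs of vertices. -/
def dXcca (X : V → ZMod 3) (u v : V) : ℤ := (X v - X u).repInt

/-- Path integral of the CCA 1-form along a walk. -/
def walkIntCCA {G : SimpleGraph V} (X : V → ZMod 3) {x y : V} (w : G.Walk x y) : ℤ :=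
  (w.darts.map fun d => dXcca X d.toProd.1 d.toProd.2).sum

/-! ### Auxiliary definitions and lemmas -/

/-- A vertex is (instantaneously) excited: some neighbor has the successor color. -/
def ccaExc (G : SimpleGraph V) (X : V → ZMod 3) (v : V) : Prop :=
  ∃ u, G.Adj v u ∧ X u = X v + 1

/-- Indicator (as an integer) of instantaneous excitation. -/
def ccaExcInt (G : SimpleGraph V) (X : V → ZMod 3) (v : V) : ℤ :=
  if ccaExc G X v then 1 else 0

lemma ccaStep_eq (G : SimpleGraph V) (X : V → ZMod 3) (v : V) :
    ccaStep G X v = if ccaExc G X v then X v + 1 else X v := rfl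

lemma dX_step (G : SimpleGraph V) (X : V → ZMod 3) {u v : V} (h : G.Adj u v) :
    dXcca (ccaStep G X) u v = dXcca X u v + ccaExcInt G X v - ccaExcInt G X u := by
  have h1 : X v - X u = 1 → ccaExc G X u := by
    intro h'
    exact ⟨v, h, by have : ∀ a b : ZMod 3, a - b = 1 → a = b + 1 := by decide
                    exact this _ _ h'⟩
  have h2 : X v - X u = 2 → ccaExc G X v := by
    intro h'
    exact ⟨u, h.symm, by have : ∀ a b : ZMod 3, a - b = 2 → b = a + 1 := by decide
                         exact this _ _ h'⟩
  rw [dXcca, dXcca, ccaStep_eq, ccaStep_eq, ccaExcInt, ccaExcInt]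
  by_cases hu : ccaExc G X u <;> by_cases hv : ccaExc G X v <;>
    simp only [hu, hv, if_pos, if_neg, if_true, if_false]
  · have : ∀ a b : ZMod 3, (a + 1 - (b + 1)).repInt = (a - b).repInt + 1 - 1 := by decide
    exact this _ _
  · have : ∀ a b : ZMod 3, a - b ≠ 2 → (a - (b + 1)).repInt = (a - b).repInt + 0 - 1 := by decide
    exact this _ _ fun hh => hv (h2 hh)
  · have : ∀ a b : ZMod 3, a - b ≠ 1 → ((a + 1) - b).repInt = (a - b).repInt + 1 - 0 := by decide
    exact this _ _ fun hh => hu (h1 hh)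
  · ring

lemma walkInt_nil {G : SimpleGraph V} (X : V → ZMod 3) (x : V) :
    walkIntCCA X (SimpleGraph.Walk.nil : G.Walk x x) = 0 := rfl

lemma walkInt_cons {G : SimpleGraph V} (X : V → ZMod 3) {x z y : V} (h : G.Adj x z)
    (p : G.Walk z y) :
    walkIntCCA X (SimpleGraph.Walk.cons h p) = dXcca X x z + walkIntCCA X p := by
  simp [walkIntCCA]

lemma walkInt_concat {G : SimpleGraph V} (X : V → ZMod 3) {x z y : V} (p : G.Walk x z)
    (h : G.Adj z y) : walkIntCCA X (p.concat h) = walkIntCCA X p + dXcca X z y := by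
  simp [walkIntCCA, List.concat_eq_append]

lemma walkInt_step (G : SimpleGraph V) (X : V → ZMod 3) {x y : V} (w : G.Walk x y) :
    walkIntCCA X w = walkIntCCA (ccaStep G X) w + ccaExcInt G X x - ccaExcInt G X y := by
  induction w with
  | nil => simp [walkInt_nil]
  | cons h p ih =>
    rw [walkInt_cons, walkInt_cons, ih, dX_step G X h]
    ring

lemma dX_step_le_exc (G : SimpleGraph V) (X : V → ZMod 3) {z y : V} (h : G.Adj z y) :
    dXcca (ccaStep G X) z y ≤ ccaExcInt G X y := by
  by_cases hy : ccaExc G X y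
  · rw [ccaExcInt, if_pos hy]
    have : ∀ a : ZMod 3, a.repInt ≤ 1 := by decide
    exact this _
  · rw [ccaExcInt, if_neg hy]
    rw [dXcca, ccaStep_eq, ccaStep_eq, if_neg hy]
    by_cases hz : ccaExc G X z
    · rw [if_pos hz]
      have hne : X y - (X z + 1) ≠ 1 := by
        intro hh
        have : ∀ a b : ZMod 3, a - (b + 1) = 1 → b = a + 1 := by decide
        exact hy ⟨z, h.symm, this _ _ hh⟩
      have : ∀ a : ZMod 3, a ≠ 1 → a.repInt ≤ 0 := by decide
      exact this _ hne
    · rw [if_neg hz]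
      have hne : X y - X z ≠ 1 := by
        intro hh
        have : ∀ a b : ZMod 3, a - b = 1 → a = b + 1 := by decide
        exact hz ⟨y, h, this _ _ hh⟩
      have : ∀ a : ZMod 3, a ≠ 1 → a.repInt ≤ 0 := by decide
      exact this _ hne

lemma excited_zero (G : SimpleGraph V) (X₀ : V → ZMod 3) (x : V) :
    ccaExcited G X₀ 0 x ↔ ccaExc G X₀ x := by
  have h0 : ccaTraj G X₀ 0 x = X₀ x := rfl
  have h1 : ccaTraj G X₀ 1 x = ccaStep G X₀ x := by
    simp [ccaTraj]
  rw [ccaExcited, h0, h1, ccaStep_eq]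
  by_cases hx : ccaExc G X₀ x
  · simp [hx]
  · simp only [hx, if_neg, if_false, iff_false]
    have : ∀ a : ZMod 3, a ≠ a + 1 := by decide
    exact this _

lemma excited_succ (G : SimpleGraph V) (X₀ : V → ZMod 3) (s : ℕ) (x : V) :
    ccaExcited G X₀ (s + 1) x ↔ ccaExcited G (ccaStep G X₀) s x := by
  simp [ccaExcited, ccaTraj, Function.iterate_succ_apply]

lemma ccaNe_succ (G : SimpleGraph V) (X₀ : V → ZMod 3) (t : ℕ) (x : V) :
    (ccaNe G X₀ (t + 1) x : ℤ) = ccaExcInt G X₀ x + (ccaNe G (ccaStep G X₀) t x : ℤ) := by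
  have key : ccaNe G X₀ (t + 1) x
      = (if ccaExc G X₀ x then 1 else 0) + ccaNe G (ccaStep G X₀) t x := by
    rw [ccaNe, ccaNe, Finset.card_filter, Finset.card_filter, Finset.sum_range_succ']
    have e0 : (if ccaExcited G X₀ 0 x then (1:ℕ) else 0) = if ccaExc G X₀ x then 1 else 0 := by
      simp [excited_zero]
    have es : ∀ s, (if ccaExcited G X₀ (s+1) x then (1:ℕ) else 0)
        = if ccaExcited G (ccaStep G X₀) s x then 1 else 0 := by
      intro s; simp [excited_succ]
    rw [e0]
    rw [Finset.sum_congr rfl fun s _ => es s]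
    omega
  rw [key, ccaExcInt]
  by_cases hx : ccaExc G X₀ x <;> simp [hx]

lemma cca_aux (G : SimpleGraph V) :
    ∀ (t : ℕ) (X₀ : V → ZMod 3) (x : V),
    IsGreatest {n : ℤ | ∃ (y : V) (w : G.Walk x y), w.length ≤ t ∧ walkIntCCA X₀ w = n}
      (ccaNe G X₀ t x : ℤ) := by
  intro t
  induction t with
  | zero =>
    intro X₀ x
    constructor
    · exact ⟨x, SimpleGraph.Walk.nil, le_refl _, by simp [ccaNe, walkInt_nil]⟩
    · rintro n ⟨y, w, hlen, rfl⟩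
      have hd : w.darts = [] := by
        apply List.eq_nil_of_length_eq_zero
        rw [SimpleGraph.Walk.length_darts]
        omega
      simp [walkIntCCA, hd, ccaNe]
  | succ t ih =>
    intro X₀ x
    obtain ⟨⟨y, w, hlen, hw⟩, hub⟩ := ih (ccaStep G X₀) x
    have hrec := ccaNe_succ G X₀ t x
    constructor
    · by_cases hy : ccaExc G X₀ y
      · obtain ⟨u, hadj, hu⟩ := hy
        refine ⟨u, w.concat hadj, ?_, ?_⟩
        · rw [SimpleGraph.Walk.length_concat]; omega
        · rw [walkInt_concat, walkInt_step G X₀ w, hw]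
          have hd : dXcca X₀ y u = 1 := by
            rw [dXcca]
            have : ∀ a b : ZMod 3, a = b + 1 → (a - b).repInt = 1 := by decide
            exact this _ _ hu
          have hE : ccaExcInt G X₀ y = 1 := if_pos ⟨u, hadj, hu⟩
          rw [hd, hE, hrec]
          ring
      · refine ⟨y, w, hlen.trans (Nat.le_succ t), ?_⟩
        rw [walkInt_step G X₀ w, hw, hrec]
        have hE : ccaExcInt G X₀ y = 0 := if_neg hy
        rw [hE]; ring
    · rintro n ⟨y, w, hlen, rfl⟩
      rw [walkInt_step G X₀ w, hrec]
      have hEy : 0 ≤ ccaExcInt G X₀ y := by rw [ccaExcInt]; split <;> norm_num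
      rcases Nat.lt_or_ge w.length (t + 1) with hl | hl
      · have hmem := hub ⟨y, w, Nat.lt_succ_iff.mp hl, rfl⟩
        linarith
      · have hnil : ¬ w.Nil := by rw [SimpleGraph.Walk.not_nil_iff_lt_length]; omega
        obtain ⟨v, h', q, hq⟩ := SimpleGraph.Walk.not_nil_iff.mp hnil
        obtain ⟨z, q', h'', hc⟩ := SimpleGraph.Walk.exists_cons_eq_concat h' q
        have hlq : q'.length ≤ t := by
          have h1 : (q'.concat h'').length = w.length := by rw [← hc, ← hq]
          rw [SimpleGraph.Walk.length_concat] at h1; omega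
        have hmem := hub ⟨z, q', hlq, rfl⟩
        have hd := dX_step_le_exc G X₀ h''
        have hwq : walkIntCCA (ccaStep G X₀) w
            = walkIntCCA (ccaStep G X₀) q' + dXcca (ccaStep G X₀) z y := by
          rw [hq, hc, walkInt_concat]
        rw [hwq]
        linarith

/-- Key lemma for CCA: the number of excitations of `x` in the first `t` steps is the
maximum of the path integral of `dX₀` over all walks starting at `x` of length at most `t`. -/
theorem cca_excitations_eq_max_walk_integral (G : SimpleGraph V)
    (hlf : ∀ v : V, (G.neighborSet v).Finite) (hconn : G.Connected)
    (X₀ : V → ZMod 3) (x : V) (t : ℕ) (ht : 1 ≤ t) :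
    IsGreatest {n : ℤ | ∃ (y : V) (w : G.Walk x y), w.length ≤ t ∧ walkIntCCA X₀ w = n}
      (ccaNe G X₀ t x : ℤ) := by
  exact cca_aux G t X₀ x
end
end

section
/- Let G=(V,E) be a finite connected simple graph and (X_t)_{t≥0} the 3-color CCA trajectory of an initial 3-coloring X_0 : V → ℤ/3ℤ. If dX_0 is not irrotational, then for every vertex x ∈ V the limit lim_{t→∞} ne_t(x)/t exists and equals max over all closed directed cycles C of (1/|V(C)|) ∮_C dX_0. -/
noncomputable section
attribute [local instance] Classical.propDecidable

open Filter

variable {V : Type*}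

namespace CCAaux
open SimpleGraph Walk

lemma repInt_cast (a : ZMod 3) : ((a.repInt : ℤ) : ZMod 3) = a := by revert a; decide

lemma repInt_neg (a : ZMod 3) : (-a).repInt = - a.repInt := by revert a; decide

lemma repInt_spec {k : ℤ} {a : ZMod 3} (h1 : -1 ≤ k) (h2 : k ≤ 1) (h : ((k : ℤ) : ZMod 3) = a) :
    a.repInt = k := by
  subst h; interval_cases k <;> decide

lemma dXcca_cast (X : V → ZMod 3) (u v : V) : ((dXcca X u v : ℤ) : ZMod 3) = X v - X u :=
  repInt_cast _

lemma dXcca_mem (X : V → ZMod 3) (u v : V) :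
    dXcca X u v = -1 ∨ dXcca X u v = 0 ∨ dXcca X u v = 1 := by
  unfold dXcca ZMod.repInt; split_ifs <;> simp

lemma dXcca_le_one (X : V → ZMod 3) (u v : V) : dXcca X u v ≤ 1 := by
  rcases dXcca_mem X u v with h | h | h <;> omega

lemma neg_one_le_dXcca (X : V → ZMod 3) (u v : V) : -1 ≤ dXcca X u v := by
  rcases dXcca_mem X u v with h | h | h <;> omega

lemma dXcca_symm (X : V → ZMod 3) (u v : V) : dXcca X v u = - dXcca X u v := by
  unfold dXcca
  rw [show X u - X v = -(X v - X u) by ring, repInt_neg]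

variable {G : SimpleGraph V}

@[simp] lemma walkInt_nil {x : V} : walkIntCCA (G := G) X (Walk.nil : G.Walk x x) = 0 := rfl

lemma walkInt_cons (X : V → ZMod 3) {x y z : V} (h : G.Adj x y) (p : G.Walk y z) :
    walkIntCCA X (Walk.cons h p) = dXcca X x y + walkIntCCA X p := by
  simp [walkIntCCA]

lemma walkInt_append (X : V → ZMod 3) {x y z : V} (p : G.Walk x y) (q : G.Walk y z) :
    walkIntCCA X (p.append q) = walkIntCCA X p + walkIntCCA X q := by
  simp [walkIntCCA, Walk.darts_append]

lemma walkInt_le_length (X : V → ZMod 3) {x y : V} (p : G.Walk x y) :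
    walkIntCCA X p ≤ p.length := by
  induction p with
  | nil => simp
  | @cons a b c h p ih =>
      rw [walkInt_cons]
      have := CCAaux.dXcca_le_one X a b
      simp only [Walk.length_cons]
      push_cast
      omega

lemma neg_length_le_walkInt (X : V → ZMod 3) {x y : V} (p : G.Walk x y) :
    -(p.length : ℤ) ≤ walkIntCCA X p := by
  induction p with
  | nil => simp
  | @cons a b c h p ih =>
      rw [walkInt_cons]
      have := CCAaux.neg_one_le_dXcca X a b
      simp only [Walk.length_cons]
      push_cast
      omega

lemma walkInt_reverse (X : V → ZMod 3) {x y : V} (p : G.Walk x y) :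
    walkIntCCA X p.reverse = - walkIntCCA X p := by
  induction p with
  | nil => simp
  | cons h p ih =>
      rw [Walk.reverse_cons, walkInt_append, walkInt_cons, walkInt_cons, walkInt_nil, ih,
        CCAaux.dXcca_symm]
      ring

lemma walkInt_take_drop (X : V → ZMod 3) {x y u : V} (p : G.Walk x y) (h : u ∈ p.support) :
    walkIntCCA X (p.takeUntil u h) + walkIntCCA X (p.dropUntil u h) = walkIntCCA X p := by
  conv_rhs => rw [← Walk.take_spec p h]
  rw [walkInt_append]

lemma length_take_drop {x y u : V} (p : G.Walk x y) (h : u ∈ p.support) :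
    (p.takeUntil u h).length + (p.dropUntil u h).length = p.length := by
  have := congrArg Walk.length (Walk.take_spec p h)
  rwa [Walk.length_append] at this

lemma walkInt_rotate (X : V → ZMod 3) {x u : V} (c : G.Walk x x) (h : u ∈ c.support) :
    walkIntCCA X (c.rotate u h) = walkIntCCA X c := by
  rw [Walk.rotate, walkInt_append, add_comm, walkInt_take_drop]

lemma length_rotate {x u : V} (c : G.Walk x x) (h : u ∈ c.support) :
    (c.rotate u h).length = c.length := by
  rw [Walk.rotate, Walk.length_append, add_comm, length_take_drop]

lemma support_getLast? {u v : V} (p : G.Walk u v) : p.support.getLast? = some v := by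
  rw [List.getLast?_eq_head?_reverse, ← Walk.support_reverse, Walk.support_eq_cons]
  rfl

lemma dropLast_support_nodup {x : V} (c : G.Walk x x) (hnd : c.support.tail.Nodup) :
    c.support.dropLast.Nodup := by
  rcases c with _ | ⟨h, q⟩
  · simp
  · rename_i u
    rw [Walk.support_cons] at hnd ⊢
    simp only [List.tail_cons] at hnd
    have hne : q.support ≠ [] := q.support_ne_nil
    rw [List.dropLast_cons_of_ne_nil hne]
    have hdecomp : q.support.dropLast ++ [x] = q.support :=
      List.dropLast_append_getLast? x (support_getLast? q)
    have h2 : (q.support.dropLast ++ [x]).Nodup := by rwa [hdecomp]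
    rw [List.nodup_append] at h2
    refine List.nodup_cons.2 (⟨?_, h2.1⟩)
    intro hx
    exact h2.2.2 x hx x (List.mem_singleton_self x) rfl

lemma isCycle_of_tailNodup {x : V} (c : G.Walk x x) (h3 : 3 ≤ c.length)
    (hnd : c.support.tail.Nodup) : c.IsCycle := by
  rcases c with _ | ⟨h, q⟩
  · simp at h3
  · rename_i u
    rw [Walk.support_cons, List.tail_cons] at hnd
    rw [Walk.cons_isCycle_iff]
    refine ⟨Walk.IsPath.mk' hnd, ?_⟩
    intro he
    rcases q with _ | ⟨h', q'⟩
    · simp at he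
    · rename_i w
      rw [Walk.edges_cons, List.mem_cons] at he
      rw [Walk.support_cons] at hnd
      have hund : u ∉ q'.support := (List.nodup_cons.1 hnd).1
      rcases he with he | he
      · rw [Sym2.eq_iff] at he
        rcases he with ⟨hxu, _⟩ | ⟨hxw, _⟩
        · exact h.ne hxu
        · subst hxw
          rcases q' with _ | ⟨h'', q''⟩
          · simp [Walk.length_cons] at h3
          · rename_i z
            have hx : x ∈ q''.support := q''.end_mem_support
            have hnd2 : (Walk.cons h'' q'').support.Nodup := (List.nodup_cons.1 hnd).2
            rw [Walk.support_cons, List.nodup_cons] at hnd2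
            exact hnd2.1 hx
      · exact hund (Walk.snd_mem_support_of_mem_edges q' he)

lemma isCycle_reverse {x : V} {c : G.Walk x x} (hc : c.IsCycle) : c.reverse.IsCycle := by
  apply isCycle_of_tailNodup
  · rw [Walk.length_reverse]; exact hc.three_le_length
  · rw [Walk.support_reverse, List.tail_reverse, List.nodup_reverse]
    exact dropLast_support_nodup c hc.support_nodup

lemma length_pos_of_tail_ne_nil {a b : V} (p : G.Walk a b) (h : p.support.tail ≠ []) :
    1 ≤ p.length := by
  have h1 : p.support.length = p.length + 1 := Walk.length_support p
  have h2 : 0 < p.support.tail.length := List.length_pos_iff.2 h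
  rw [List.length_tail] at h2
  omega

lemma split_closed (X : V → ZMod 3) {y : V} (c : G.Walk y y)
    (h2 : 2 ≤ c.support.tail.count y) :
    ∃ c₁ c₂ : G.Walk y y, walkIntCCA X c = walkIntCCA X c₁ + walkIntCCA X c₂ ∧
      c.length = c₁.length + c₂.length ∧ 1 ≤ c₁.length ∧ 1 ≤ c₂.length := by
  rcases c with _ | ⟨h, r⟩
  · simp at h2
  · rename_i u
    rw [Walk.support_cons, List.tail_cons] at h2
    have hy : y ∈ r.support := List.count_pos_iff.1 (by omega)
    have hc1 : (r.takeUntil y hy).support.count y = 1 :=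
      Walk.count_support_takeUntil_eq_one r hy
    have hsup : r.support = (r.takeUntil y hy).support ++ (r.dropUntil y hy).support.tail := by
      conv_lhs => rw [← Walk.take_spec r hy]
      rw [Walk.support_append]
    rw [hsup, List.count_append, hc1] at h2
    have hne : (r.dropUntil y hy).support.tail ≠ [] := by
      intro h0; rw [h0] at h2; simp at h2
    refine ⟨Walk.cons h (r.takeUntil y hy), r.dropUntil y hy, ?_, ?_, ?_, ?_⟩
    · rw [walkInt_cons, walkInt_cons, add_assoc, walkInt_take_drop]
    · have := length_take_drop r hy
      rw [Walk.length_cons, Walk.length_cons]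
      omega
    · rw [Walk.length_cons]; omega
    · exact length_pos_of_tail_ne_nil _ hne

lemma split_at_tail_mem (X : V → ZMod 3) {y b : V} (t : G.Walk y b)
    (hyt : y ∈ t.support.tail) :
    ∃ (m : G.Walk y y) (q : G.Walk y b),
      walkIntCCA X t = walkIntCCA X m + walkIntCCA X q ∧
      t.length = m.length + q.length ∧ 1 ≤ m.length := by
  rcases t with _ | ⟨h, r⟩
  · simp at hyt
  · rename_i u
    rw [Walk.support_cons, List.tail_cons] at hyt
    refine ⟨Walk.cons h (r.takeUntil y hyt), r.dropUntil y hyt, ?_, ?_, ?_⟩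
    · rw [walkInt_cons, walkInt_cons, add_assoc, walkInt_take_drop]
    · have := length_take_drop r hyt
      rw [Walk.length_cons, Walk.length_cons]
      omega
    · rw [Walk.length_cons]; omega

lemma split_not_nodup (X : V → ZMod 3) {a b : V} (p : G.Walk a b)
    (hnd : ¬ p.support.Nodup) :
    ∃ (y : V) (c : G.Walk y y) (q : G.Walk a b),
      walkIntCCA X p = walkIntCCA X c + walkIntCCA X q ∧
      p.length = c.length + q.length ∧ 1 ≤ c.length := by
  obtain ⟨y, hdup⟩ := List.exists_duplicate_iff_not_nodup.2 hnd
  have h2 : 2 ≤ p.support.count y := List.duplicate_iff_two_le_count.1 hdup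
  have hy : y ∈ p.support := List.count_pos_iff.1 (by omega)
  have hc1 : (p.takeUntil y hy).support.count y = 1 :=
    Walk.count_support_takeUntil_eq_one p hy
  have hsup : p.support = (p.takeUntil y hy).support ++ (p.dropUntil y hy).support.tail := by
    conv_lhs => rw [← Walk.take_spec p hy]
    rw [Walk.support_append]
  rw [hsup, List.count_append, hc1] at h2
  have hyt : y ∈ (p.dropUntil y hy).support.tail := List.count_pos_iff.1 (by omega)
  obtain ⟨m, q2, hint, hlen, hm⟩ := split_at_tail_mem X (p.dropUntil y hy) hyt
  refine ⟨y, m, (p.takeUntil y hy).append q2, ?_, ?_, hm⟩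
  · rw [walkInt_append, ← walkInt_take_drop X p hy, hint]
    ring
  · rw [Walk.length_append, ← length_take_drop p hy, hlen]
    omega

lemma traj_succ (G : SimpleGraph V) (X₀ : V → ZMod 3) (t : ℕ) :
    ccaTraj G X₀ (t+1) = ccaStep G (ccaTraj G X₀ t) :=
  Function.iterate_succ_apply' _ _ _

lemma excited_iff (G : SimpleGraph V) (X₀ : V → ZMod 3) (t : ℕ) (v : V) :
    ccaExcited G X₀ t v ↔ ∃ u, G.Adj v u ∧ ccaTraj G X₀ t u = ccaTraj G X₀ t v + 1 := by
  unfold ccaExcited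
  rw [traj_succ]
  show (if ∃ u, G.Adj v u ∧ ccaTraj G X₀ t u = ccaTraj G X₀ t v + 1
      then ccaTraj G X₀ t v + 1 else ccaTraj G X₀ t v) = ccaTraj G X₀ t v + 1 ↔ _
  by_cases h : ∃ u, G.Adj v u ∧ ccaTraj G X₀ t u = ccaTraj G X₀ t v + 1
  · rw [if_pos h]; simp [h]
  · rw [if_neg h]
    constructor
    · intro hEq
      exfalso
      have h1 : (1 : ZMod 3) = 0 := left_eq_add.mp hEq
      exact one_ne_zero h1
    · intro hex; exact absurd hex h

lemma ne_zero' (G : SimpleGraph V) (X₀ : V → ZMod 3) (v : V) : ccaNe G X₀ 0 v = 0 := by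
  simp [ccaNe]

lemma ne_succ (G : SimpleGraph V) (X₀ : V → ZMod 3) (t : ℕ) (v : V) :
    ccaNe G X₀ (t+1) v = ccaNe G X₀ t v + (if ccaExcited G X₀ t v then 1 else 0) := by
  unfold ccaNe
  rw [Finset.range_add_one, Finset.filter_insert]
  split_ifs with h
  · rw [Finset.card_insert_of_notMem (by simp)]
  · rw [add_zero]

lemma traj_step (G : SimpleGraph V) (X₀ : V → ZMod 3) (t : ℕ) (v : V) :
    ccaTraj G X₀ (t+1) v
      = ccaTraj G X₀ t v + (if ccaExcited G X₀ t v then 1 else 0) := by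
  by_cases hexc : ccaExcited G X₀ t v
  · rw [if_pos hexc]; exact hexc
  · rw [if_neg hexc, add_zero]
    rw [excited_iff] at hexc
    rw [traj_succ]
    show (if ∃ u, G.Adj v u ∧ ccaTraj G X₀ t u = ccaTraj G X₀ t v + 1
      then ccaTraj G X₀ t v + 1 else ccaTraj G X₀ t v) = ccaTraj G X₀ t v
    rw [if_neg hexc]

lemma traj_eq (G : SimpleGraph V) (X₀ : V → ZMod 3) (t : ℕ) (v : V) :
    ccaTraj G X₀ t v = X₀ v + ((ccaNe G X₀ t v : ℕ) : ZMod 3) := by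
  induction t with
  | zero => simp [ccaNe]; rfl
  | succ t ih =>
      rw [traj_step, ih, ne_succ]
      split_ifs <;> push_cast <;> ring

lemma ne_le_succ (G : SimpleGraph V) (X₀ : V → ZMod 3) (t : ℕ) (v : V) :
    ccaNe G X₀ t v ≤ ccaNe G X₀ (t+1) v ∧ ccaNe G X₀ (t+1) v ≤ ccaNe G X₀ t v + 1 := by
  rw [ne_succ]; split_ifs <;> omega

lemma ne_mono (G : SimpleGraph V) (X₀ : V → ZMod 3) {s t : ℕ} (h : s ≤ t) (v : V) :
    ccaNe G X₀ s v ≤ ccaNe G X₀ t v := by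
  induction t with
  | zero =>
      have hs : s = 0 := by omega
      subst hs
      exact le_refl _
  | succ t ih =>
      rcases Nat.lt_or_ge s (t+1) with h' | h'
      · exact le_trans (ih (by omega)) (ne_le_succ G X₀ t v).1
      · have : s = t + 1 := by omega
        rw [this]

lemma dX_traj (G : SimpleGraph V) (X₀ : V → ZMod 3) :
    ∀ (t : ℕ) ⦃v u : V⦄, G.Adj v u →
      dXcca (ccaTraj G X₀ t) v u
        = dXcca X₀ v u + (ccaNe G X₀ t u : ℤ) - (ccaNe G X₀ t v : ℤ) := by
  intro t
  induction t with
  | zero => intro v u _; simp [ccaNe]; rfl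
  | succ t ih =>
      intro v u hadj
      have hIH := ih hadj
      have hku : (ccaNe G X₀ (t+1) u : ℤ)
          = (ccaNe G X₀ t u : ℤ) + (if ccaExcited G X₀ t u then (1:ℤ) else 0) := by
        rw [ne_succ]; split_ifs <;> push_cast <;> ring
      have hkv : (ccaNe G X₀ (t+1) v : ℤ)
          = (ccaNe G X₀ t v : ℤ) + (if ccaExcited G X₀ t v then (1:ℤ) else 0) := by
        rw [ne_succ]; split_ifs <;> push_cast <;> ring
      have hk : dXcca X₀ v u + (ccaNe G X₀ (t+1) u : ℤ) - (ccaNe G X₀ (t+1) v : ℤ)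
          = dXcca (ccaTraj G X₀ t) v u + (if ccaExcited G X₀ t u then (1:ℤ) else 0)
            - (if ccaExcited G X₀ t v then (1:ℤ) else 0) := by
        rw [hku, hkv, hIH]; ring
      have hb : -1 ≤ dXcca X₀ v u + (ccaNe G X₀ (t+1) u : ℤ) - (ccaNe G X₀ (t+1) v : ℤ) ∧
          dXcca X₀ v u + (ccaNe G X₀ (t+1) u : ℤ) - (ccaNe G X₀ (t+1) v : ℤ) ≤ 1 := by
        rw [hk]
        rcases dXcca_mem (ccaTraj G X₀ t) v u with hc | hc | hc
        · have h' := dXcca_cast (ccaTraj G X₀ t) v u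
          rw [hc] at h'
          have hxy : ccaTraj G X₀ t v = ccaTraj G X₀ t u + 1 := by
            push_cast at h'
            linear_combination h'
          have hexu : ccaExcited G X₀ t u :=
            (excited_iff G X₀ t u).2 ⟨v, hadj.symm, hxy⟩
          rw [hc, if_pos hexu]
          split_ifs <;> omega
        · rw [hc]; split_ifs <;> omega
        · have h' := dXcca_cast (ccaTraj G X₀ t) v u
          rw [hc] at h'
          have hxy : ccaTraj G X₀ t u = ccaTraj G X₀ t v + 1 := by
            push_cast at h'
            linear_combination -h'
          have hexv : ccaExcited G X₀ t v :=
            (excited_iff G X₀ t v).2 ⟨u, hadj, hxy⟩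
          rw [hc, if_pos hexv]
          split_ifs <;> omega
      refine repInt_spec hb.1 hb.2 ?_
      push_cast
      rw [dXcca_cast, traj_eq G X₀ (t+1) u, traj_eq G X₀ (t+1) v]
      push_cast
      ring

lemma step_lower (G : SimpleGraph V) (X₀ : V → ZMod 3) {v u : V} (hadj : G.Adj v u) (t : ℕ) :
    (ccaNe G X₀ t u : ℤ) + dXcca X₀ v u ≤ (ccaNe G X₀ (t+1) v : ℤ) := by
  have hIH := dX_traj G X₀ t hadj
  have hmono : ccaNe G X₀ t v ≤ ccaNe G X₀ (t+1) v := (ne_le_succ G X₀ t v).1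
  rcases dXcca_mem (ccaTraj G X₀ t) v u with hc | hc | hc
  · rw [hc] at hIH; omega
  · rw [hc] at hIH; omega
  · have h' := dXcca_cast (ccaTraj G X₀ t) v u
    rw [hc] at h'
    have hxy : ccaTraj G X₀ t u = ccaTraj G X₀ t v + 1 := by
      push_cast at h'
      linear_combination -h'
    have hexv : ccaExcited G X₀ t v := (excited_iff G X₀ t v).2 ⟨u, hadj, hxy⟩
    have : ccaNe G X₀ (t+1) v = ccaNe G X₀ t v + 1 := by rw [ne_succ, if_pos hexv]
    rw [hc] at hIH
    omega

lemma step_upper (G : SimpleGraph V) (X₀ : V → ZMod 3) {v : V} (t : ℕ)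
    (hexc : ccaExcited G X₀ t v) :
    ∃ u, G.Adj v u ∧ (ccaNe G X₀ (t+1) v : ℤ) = (ccaNe G X₀ t u : ℤ) + dXcca X₀ v u := by
  obtain ⟨u, hadj, hxy⟩ := (excited_iff G X₀ t v).1 hexc
  have hdX : dXcca (ccaTraj G X₀ t) v u = 1 := by
    refine repInt_spec (by norm_num) (by norm_num) ?_
    rw [hxy]
    push_cast
    ring
  have hIH := dX_traj G X₀ t hadj
  rw [hdX] at hIH
  have hstep : ccaNe G X₀ (t+1) v = ccaNe G X₀ t v + 1 := by rw [ne_succ, if_pos hexc]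
  exact ⟨u, hadj, by omega⟩

lemma walk_lower (G : SimpleGraph V) (X₀ : V → ZMod 3) :
    ∀ {v y : V} (p : G.Walk v y) (t : ℕ),
      (ccaNe G X₀ t y : ℤ) + walkIntCCA X₀ p ≤ (ccaNe G X₀ (t + p.length) v : ℤ) := by
  intro v y p
  induction p with
  | nil => simp
  | @cons a b c h p ih =>
      intro t
      rw [walkInt_cons, Walk.length_cons]
      have h1 := ih t
      have h2 := step_lower G X₀ h (t + p.length)
      have h3 : t + (p.length + 1) = (t + p.length) + 1 := by ring
      rw [h3]
      omega

lemma walk_upper (G : SimpleGraph V) (X₀ : V → ZMod 3) :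
    ∀ (t : ℕ) (v : V), ∃ (y : V) (p : G.Walk v y),
      p.length ≤ t ∧ (ccaNe G X₀ t v : ℤ) ≤ walkIntCCA X₀ p := by
  intro t
  induction t with
  | zero => intro v; exact ⟨v, Walk.nil, by simp, by simp [ne_zero']⟩
  | succ t ih =>
      intro v
      by_cases hexc : ccaExcited G X₀ t v
      · obtain ⟨u, hadj, heq⟩ := step_upper G X₀ t hexc
        obtain ⟨y, p, hlen, hle⟩ := ih u
        refine ⟨y, Walk.cons hadj p, by rw [Walk.length_cons]; omega, ?_⟩
        rw [walkInt_cons]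
        omega
      · obtain ⟨y, p, hlen, hle⟩ := ih v
        have hne : ccaNe G X₀ (t+1) v = ccaNe G X₀ t v := by rw [ne_succ, if_neg hexc, add_zero]
        exact ⟨y, p, by omega, by rw [hne]; exact hle⟩

lemma closed_bound [Fintype V] {G : SimpleGraph V} (X₀ : V → ZMod 3) {M : ℝ}
    (hub : ∀ ⦃v : V⦄ (c : G.Walk v v), c.IsCycle → (walkIntCCA X₀ c : ℝ) / (c.length : ℝ) ≤ M)
    (hMpos : 0 < M) :
    ∀ (m : ℕ) {x : V} (c : G.Walk x x), c.length = m → (walkIntCCA X₀ c : ℝ) ≤ M * m := by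
  intro m
  induction m using Nat.strong_induction_on with
  | _ m ih =>
    intro x c hlen
    by_cases hnd : c.support.tail.Nodup
    · match m, hlen with
      | 0, hlen =>
          have : c = Walk.nil := Walk.nil_iff_eq_nil.1 (Walk.length_eq_zero_iff.1 hlen)
          subst this
          simp
      | 1, hlen => -- impossible
          exfalso
          rcases c with _ | ⟨h, q⟩
          · simp at hlen
          · rw [Walk.length_cons] at hlen
            have := Walk.eq_of_length_eq_zero (p := q) (by omega)
            subst this
            exact G.irrefl h
      | 2, hlen =>
          rcases c with _ | ⟨h, q⟩
          · simp at hlen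
          · rename_i u
            rcases q with _ | ⟨h', q'⟩
            · simp at hlen
            · rename_i w
              rw [Walk.length_cons, Walk.length_cons] at hlen
              have hwx := Walk.eq_of_length_eq_zero (p := q') (by omega)
              subst hwx
              have hq' : q' = Walk.nil := Walk.nil_iff_eq_nil.1 ((Walk.length_eq_zero_iff (p := q')).1 (by omega))
              subst hq'
              have hz : walkIntCCA X₀ (Walk.cons h (Walk.cons h' Walk.nil)) = 0 := by
                rw [walkInt_cons, walkInt_cons, walkInt_nil, CCAaux.dXcca_symm X₀]
                ring
              rw [hz]
              push_cast
              positivity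
      | (m+3), hlen =>
          have hcyc : c.IsCycle := isCycle_of_tailNodup c (by omega) hnd
          have hq := hub c hcyc
          have hlpos : (0:ℝ) < (c.length : ℝ) := by
            rw [hlen]; positivity
          rw [div_le_iff₀ hlpos] at hq
          calc (walkIntCCA X₀ c : ℝ) ≤ M * (c.length : ℝ) := hq
            _ = M * ((m+3 : ℕ) : ℝ) := by rw [hlen]
    · rw [← List.exists_duplicate_iff_not_nodup] at hnd
      obtain ⟨y, hdup⟩ := hnd
      have h2 : 2 ≤ c.support.tail.count y := List.duplicate_iff_two_le_count.1 hdup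
      have hyt : y ∈ c.support.tail := List.count_pos_iff.1 (by omega)
      have hy : y ∈ c.support := List.mem_of_mem_tail hyt
      have h2' : 2 ≤ (c.rotate y hy).support.tail.count y := by
        rw [((Walk.support_rotate c y hy).perm).count_eq]
        exact h2
      obtain ⟨c₁, c₂, hint, hlen2, hm1, hm2⟩ := split_closed X₀ (c.rotate y hy) h2'
      have hrlen : (c.rotate y hy).length = m := by rw [length_rotate]; exact hlen
      have hb1 := ih c₁.length (by omega) c₁ rfl
      have hb2 := ih c₂.length (by omega) c₂ rfl
      have hri : walkIntCCA X₀ (c.rotate y hy) = walkIntCCA X₀ c := walkInt_rotate X₀ c hy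
      rw [← hri, hint]
      push_cast
      have hmr : (m : ℝ) = (c₁.length : ℝ) + (c₂.length : ℝ) := by
        rw [← hrlen, hlen2]
        push_cast
        ring
      rw [hmr]
      nlinarith

lemma walk_bound [Fintype V] {G : SimpleGraph V} (X₀ : V → ZMod 3) {M : ℝ}
    (hub : ∀ ⦃v : V⦄ (c : G.Walk v v), c.IsCycle → (walkIntCCA X₀ c : ℝ) / (c.length : ℝ) ≤ M)
    (hMpos : 0 < M) :
    ∀ (m : ℕ) {a b : V} (p : G.Walk a b), p.length = m →
      (walkIntCCA X₀ p : ℝ) ≤ M * m + (Fintype.card V : ℝ) := by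
  intro m
  induction m using Nat.strong_induction_on with
  | _ m ih =>
    intro a b p hlen
    by_cases hnd : p.support.Nodup
    · have h1 : walkIntCCA X₀ p ≤ (p.length : ℤ) := walkInt_le_length X₀ p
      have h2 : p.support.length ≤ Fintype.card V := List.Nodup.length_le_card hnd
      have h3 : p.support.length = p.length + 1 := Walk.length_support p
      have h4 : (walkIntCCA X₀ p : ℝ) ≤ (Fintype.card V : ℝ) := by
        have : walkIntCCA X₀ p ≤ (Fintype.card V : ℤ) := by omega
        exact_mod_cast this
      have h5 : (0:ℝ) ≤ M * m := by positivity
      linarith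
    · obtain ⟨y, c, q, hint, hlen2, hc1⟩ := split_not_nodup X₀ p hnd
      have hq := ih q.length (by omega) q rfl
      have hc := closed_bound X₀ hub hMpos c.length c rfl
      have hmr : (m : ℝ) = (c.length : ℝ) + (q.length : ℝ) := by
        rw [← hlen, hlen2]
        push_cast
        ring
      rw [hint, hmr]
      push_cast
      nlinarith

end CCAaux

/-- On a finite connected graph, if `dX₀` is not irrotational, then for every vertex the
excitation rate `ne_t(x)/t` converges to the maximum over directed cycles `C` of
`(∮_C dX₀) / |V(C)|` (the number of distinct vertices of a cycle being its length). -/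
theorem cca_activity_eq_max_cycle_mean [Fintype V] (G : SimpleGraph V)
    (hconn : G.Connected) (X₀ : V → ZMod 3)
    (hnirr : ¬ ∀ (v : V) (c : G.Walk v v), c.IsCycle → walkIntCCA X₀ c = 0) :
    ∃ M : ℝ,
      IsGreatest {r : ℝ | ∃ (v : V) (c : G.Walk v v), c.IsCycle ∧
        r = (walkIntCCA X₀ c : ℝ) / (c.length : ℝ)} M ∧
      ∀ x : V, Tendsto (fun t : ℕ => (ccaNe G X₀ t x : ℝ) / t) atTop (nhds M) := by
  classical
  push_neg at hnirr
  obtain ⟨va, ca, hcyca, hca0⟩ := hnirr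
  set S : Set ℝ := {r : ℝ | ∃ (v : V) (c : G.Walk v v), c.IsCycle ∧
      r = (walkIntCCA X₀ c : ℝ) / (c.length : ℝ)} with hSdef
  have hcyclen : ∀ {v : V} (c : G.Walk v v), c.IsCycle → c.length ≤ Fintype.card V := by
    intro v c hc
    have h1 : c.support.tail.length ≤ Fintype.card V :=
      List.Nodup.length_le_card hc.support_nodup
    have h2 : c.support.length = c.length + 1 := SimpleGraph.Walk.length_support c
    have h3 : c.support.tail.length = c.support.length - 1 := List.length_tail
    omega
  have hfin : S.Finite := by
    have hbig : ((fun pq : ℤ × ℕ => (pq.1 : ℝ) / (pq.2 : ℝ)) ''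
        ((Set.Icc (-(Fintype.card V : ℤ)) (Fintype.card V : ℤ)) ×ˢ
          (Set.Icc 1 (Fintype.card V)))).Finite :=
      ((Set.finite_Icc _ _).prod (Set.finite_Icc _ _)).image _
    apply hbig.subset
    rintro r ⟨v, c, hc, rfl⟩
    refine ⟨(walkIntCCA X₀ c, c.length), ⟨⟨?_, ?_⟩, ?_, ?_⟩, rfl⟩
    · have h1 := CCAaux.neg_length_le_walkInt X₀ c
      have h2 := hcyclen c hc
      omega
    · have h1 := CCAaux.walkInt_le_length X₀ c
      have h2 := hcyclen c hc
      omega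
    · have := hc.three_le_length
      omega
    · exact hcyclen c hc
  have hSne : S.Nonempty := ⟨_, va, ca, hcyca, rfl⟩
  have hFne : hfin.toFinset.Nonempty := by
    rwa [Set.Finite.toFinset_nonempty]
  set M := hfin.toFinset.max' hFne with hMdef
  have hMmem : M ∈ S := by
    have := hfin.toFinset.max'_mem hFne
    rwa [Set.Finite.mem_toFinset] at this
  have hMub : ∀ r ∈ S, r ≤ M := fun r hr => hfin.toFinset.le_max' r (hfin.mem_toFinset.2 hr)
  have hM : IsGreatest S M := ⟨hMmem, hMub⟩
  have hub : ∀ ⦃v : V⦄ (c : G.Walk v v), c.IsCycle →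
      (walkIntCCA X₀ c : ℝ) / (c.length : ℝ) ≤ M :=
    fun v c hc => hMub _ ⟨v, c, hc, rfl⟩
  have hlenpos : ∀ {v : V} (c : G.Walk v v), c.IsCycle → (0:ℝ) < (c.length : ℝ) := by
    intro v c hc
    have h := hc.three_le_length
    exact_mod_cast (by omega : 0 < c.length)
  have hMpos : 0 < M := by
    rcases lt_trichotomy (walkIntCCA X₀ ca) 0 with hlt | heq | hgt
    · have hrc : ca.reverse.IsCycle := CCAaux.isCycle_reverse hcyca
      have hpos : 0 < (walkIntCCA X₀ ca.reverse : ℝ) / (ca.reverse.length : ℝ) := by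
        apply div_pos
        · have h1 : walkIntCCA X₀ ca.reverse = - walkIntCCA X₀ ca :=
            CCAaux.walkInt_reverse X₀ ca
          rw [h1]
          have : (0:ℤ) < -walkIntCCA X₀ ca := by omega
          exact_mod_cast this
        · rw [SimpleGraph.Walk.length_reverse]; exact hlenpos ca hcyca
      exact lt_of_lt_of_le hpos (hMub _ ⟨va, ca.reverse, hrc, rfl⟩)
    · exact absurd heq hca0
    · have hpos : 0 < (walkIntCCA X₀ ca : ℝ) / (ca.length : ℝ) :=
        div_pos (by exact_mod_cast hgt) (hlenpos ca hcyca)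
      exact lt_of_lt_of_le hpos (hMub _ ⟨va, ca, hcyca, rfl⟩)
  simp only [hSdef, Set.mem_setOf_eq] at hMmem
  obtain ⟨v₀, c₀, hc₀, hMeq⟩ := hMmem
  have hLpos : 0 < c₀.length := by have := hc₀.three_le_length; omega
  have hLposR : (0:ℝ) < (c₀.length : ℝ) := by exact_mod_cast hLpos
  have hIR : (walkIntCCA X₀ c₀ : ℝ) = M * (c₀.length : ℝ) := by
    rw [hMeq]
    field_simp
  have hIpos : 0 < walkIntCCA X₀ c₀ := by
    have h : (0:ℝ) < (walkIntCCA X₀ c₀ : ℝ) := by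
      rw [hIR]; exact mul_pos hMpos hLposR
    exact_mod_cast h
  have hkL : ∀ k : ℕ, (k:ℤ) * walkIntCCA X₀ c₀ ≤ (ccaNe G X₀ (k * c₀.length) v₀ : ℤ) := by
    intro k
    induction k with
    | zero => simp [CCAaux.ne_zero']
    | succ k ih =>
        have hw := CCAaux.walk_lower G X₀ c₀ (k * c₀.length)
        have hkl : (k+1) * c₀.length = k * c₀.length + c₀.length := by ring
        rw [hkl]
        push_cast
        push_cast at ih
        linarith [ih, hw]
  have hlower : ∀ x : V, ∃ C : ℝ, ∀ t : ℕ, M * t - C ≤ (ccaNe G X₀ t x : ℝ) := by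
    intro x
    obtain ⟨p⟩ := hconn.preconnected x v₀
    refine ⟨M * p.length + (walkIntCCA X₀ c₀ : ℝ) + p.length, ?_⟩
    intro t
    have hne0 : (0:ℝ) ≤ (ccaNe G X₀ t x : ℝ) := by positivity
    have hIRpos : (0:ℝ) < (walkIntCCA X₀ c₀ : ℝ) := by exact_mod_cast hIpos
    have hdp0 : (0:ℝ) ≤ (p.length : ℝ) := by positivity
    rcases Nat.lt_or_ge t p.length with hts | hts
    · have h1 : M * (t:ℝ) ≤ M * (p.length:ℝ) := by
        apply mul_le_mul_of_nonneg_left _ hMpos.le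
        exact_mod_cast hts.le
      linarith
    · have hts' : t = (t - p.length) + p.length := by omega
      set s := t - p.length with hsdef
      have h1 := CCAaux.walk_lower G X₀ p s
      rw [← hts'] at h1
      have h2 : -(p.length : ℤ) ≤ walkIntCCA X₀ p := CCAaux.neg_length_le_walkInt X₀ p
      have h3 := hkL (s / c₀.length)
      have h5 : ccaNe G X₀ (s / c₀.length * c₀.length) v₀ ≤ ccaNe G X₀ s v₀ :=
        CCAaux.ne_mono G X₀ (Nat.div_mul_le_self s c₀.length) v₀
      have hmod := Nat.div_add_mod s c₀.length
      have hmlt : s % c₀.length < c₀.length := Nat.mod_lt s hLpos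
      have hineq : s < c₀.length * (s / c₀.length) + c₀.length := by omega
      have hsR' : (s:ℝ) < (c₀.length:ℝ) * ((s / c₀.length : ℕ):ℝ) + (c₀.length:ℝ) := by
        exact_mod_cast hineq
      have h6 : ((s / c₀.length : ℕ):ℤ) * walkIntCCA X₀ c₀ ≤ (ccaNe G X₀ s v₀ : ℤ) :=
        le_trans h3 (by exact_mod_cast h5)
      have h7 : ((s / c₀.length : ℕ):ℝ) * (walkIntCCA X₀ c₀ : ℝ) - (p.length : ℝ)
          ≤ (ccaNe G X₀ t x : ℝ) := by
        have h7' : ((s / c₀.length : ℕ):ℤ) * walkIntCCA X₀ c₀ - (p.length : ℤ)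
            ≤ (ccaNe G X₀ t x : ℤ) := by linarith [h1, h2, h6]
        have h7'' := (@Int.cast_le ℝ _ _ _).2 h7'
        simp only [Int.cast_sub, Int.cast_mul, Int.cast_natCast] at h7''
        convert h7'' using 2
      have hmul : M * (s:ℝ)
          < M * ((c₀.length:ℝ) * ((s / c₀.length : ℕ):ℝ) + (c₀.length:ℝ)) :=
        mul_lt_mul_of_pos_left hsR' hMpos
      have h9 : ((s / c₀.length : ℕ):ℝ) * (walkIntCCA X₀ c₀ : ℝ)
          = ((s / c₀.length : ℕ):ℝ) * (M * (c₀.length:ℝ)) := by rw [hIR]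
      have h8 : M * (s:ℝ) ≤ ((s / c₀.length : ℕ):ℝ) * (walkIntCCA X₀ c₀ : ℝ)
          + (walkIntCCA X₀ c₀ : ℝ) := by
        nlinarith [hmul, h9, hIR]
      have htR : (t:ℝ) = (s:ℝ) + (p.length:ℝ) := by exact_mod_cast hts'
      rw [htR]
      nlinarith [h7, h8]
  have hupper : ∀ (x : V) (t : ℕ),
      (ccaNe G X₀ t x : ℝ) ≤ M * t + (Fintype.card V : ℝ) := by
    intro x t
    obtain ⟨y, p, hplen, hple⟩ := CCAaux.walk_upper G X₀ t x
    have h1 : (ccaNe G X₀ t x : ℝ) ≤ (walkIntCCA X₀ p : ℝ) := by exact_mod_cast hple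
    have h2 := CCAaux.walk_bound X₀ hub hMpos p.length p rfl
    have h3 : M * (p.length:ℝ) ≤ M * (t:ℝ) := by
      apply mul_le_mul_of_nonneg_left _ hMpos.le
      exact_mod_cast hplen
    linarith
  refine ⟨M, hM, ?_⟩
  intro x
  obtain ⟨C, hC⟩ := hlower x
  have hlim1 : Tendsto (fun t : ℕ => M - C / t) atTop (nhds M) := by
    have h := Tendsto.sub (tendsto_const_nhds (x := M))
      (tendsto_const_div_atTop_nhds_zero_nat C)
    simpa using h
  have hlim2 : Tendsto (fun t : ℕ => M + (Fintype.card V : ℝ) / t) atTop (nhds M) := by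
    have h := Tendsto.add (tendsto_const_nhds (x := M))
      (tendsto_const_div_atTop_nhds_zero_nat (Fintype.card V : ℝ))
    simpa using h
  apply tendsto_of_tendsto_of_tendsto_of_le_of_le' hlim1 hlim2
  · filter_upwards [eventually_ge_atTop 1] with t ht
    have htpos : (0:ℝ) < (t:ℝ) := by exact_mod_cast (by omega : 0 < t)
    have h1 := hC t
    have h2 : (M * t - C) / (t:ℝ) ≤ (ccaNe G X₀ t x : ℝ) / t :=
      (div_le_div_iff_of_pos_right htpos).2 h1
    calc M - C / t = (M * t - C) / t := by
          rw [sub_div, mul_div_assoc, div_self htpos.ne', mul_one]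
      _ ≤ _ := h2
  · filter_upwards [eventually_ge_atTop 1] with t ht
    have htpos : (0:ℝ) < (t:ℝ) := by exact_mod_cast (by omega : 0 < t)
    have h1 := hupper x t
    calc (ccaNe G X₀ t x : ℝ) / t ≤ (M * t + (Fintype.card V : ℝ)) / t :=
          (div_le_div_iff_of_pos_right htpos).2 h1
      _ = M + (Fintype.card V : ℝ) / t := by
          rw [add_div, mul_div_assoc, div_self htpos.ne', mul_one]
end
end
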